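/- Let p be analytic on the unit disc with p(0)=1, Re(p(z)) > 0, p(z) = 1 + q·z + ... . If f is analytic with f(z) = z + f₁z² + ... and Re(f(z)/(z·p(z))) > 0 on the punctured disc, then |f₁| ≤ 4. -/

import Mathlib

open Complex Metric

/-- Herglotz coefficient bound: analytic on unit disc, h 0 = 1, Re h > 0 implies |h'(0)| ≤ 2. -/
lemma herglotz_deriv_bound (h : ℂ → ℂ)
    (hd : DifferentiableOn ℂ h (ball (0:ℂ) 1)) (h0 : h 0 = 1)
    (hre : ∀ z ∈ ball (0:ℂ) 1, 0 < (h z).re) :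
    ‖deriv h 0‖ ≤ 2 := by
  set w : ℂ → ℂ := fun z => (h z - 1) / (h z + 1) with hw
  have hne : ∀ z ∈ ball (0:ℂ) 1, h z + 1 ≠ 0 := by
    intro z hz hzero
    have := hre z hz
    have : (h z + 1).re = 0 := by rw [hzero]; simp
    simp [Complex.add_re] at this
    linarith
  have hwd : DifferentiableOn ℂ w (ball (0:ℂ) 1) :=
    ((hd.sub_const 1).div (hd.add_const 1) hne)
  have hw0 : w 0 = 0 := by simp [hw, h0]
  have hmaps : Set.MapsTo w (ball (0:ℂ) 1) (ball (0:ℂ) 1) := by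
    intro z hz
    simp only [mem_ball, dist_zero_right] at hz ⊢
    show ‖(h z - 1) / (h z + 1)‖ < 1
    have hnz := hne z (by simpa using hz)
    have hre' := hre z (by simpa using hz)
    rw [norm_div, div_lt_one (norm_pos_iff.mpr hnz)]
    have key : ‖h z + 1‖ ^ 2 - ‖h z - 1‖ ^ 2 = 4 * (h z).re := by
      simp only [← Complex.normSq_eq_norm_sq]
      simp [Complex.normSq_apply, Complex.add_re, Complex.sub_re, Complex.add_im,
        Complex.sub_im]
      ring
    nlinarith [norm_nonneg (h z - 1), norm_nonneg (h z + 1)]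
  have hs : ‖deriv w 0‖ ≤ 1 := by
    have := Complex.norm_deriv_le_div_of_mapsTo_ball hwd (by rw [hw0]; exact hmaps.mono_right ball_subset_closedBall) one_pos
    simpa using this
  have hda : DifferentiableAt ℂ h 0 :=
    (hd.differentiableAt (isOpen_ball.mem_nhds (by simp)))
  have hder : HasDerivAt w (deriv h 0 / 2) 0 := by
    have h1 : HasDerivAt (fun z => h z - 1) (deriv h 0) 0 :=
      (hda.hasDerivAt).sub_const 1
    have h2 : HasDerivAt (fun z => h z + 1) (deriv h 0) 0 :=
      (hda.hasDerivAt).add_const 1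
    have := h1.div h2 (by simp [h0])
    refine this.congr_deriv ?_
    rw [h0]
    ring
  rw [hder.deriv] at hs
  rw [norm_div] at hs
  simp only [Complex.norm_ofNat] at hs
  linarith [(div_le_one (by norm_num : (0:ℝ) < 2)).mp hs]

theorem stmt_2 (p f : ℂ → ℂ) (q f₁ : ℂ)
    (hp : AnalyticOn ℂ p (ball (0:ℂ) 1)) (hp0 : p 0 = 1)
    (hpre : ∀ z ∈ ball (0:ℂ) 1, 0 < (p z).re)
    (hpq : deriv p 0 = q)
    (hf : AnalyticOn ℂ f (ball (0:ℂ) 1)) (hf0 : f 0 = 0)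
    (hf1 : deriv f 0 = 1) (hf2 : iteratedDeriv 2 f 0 = 2 * f₁)
    (hfp : ∀ z ∈ ball (0:ℂ) 1, z ≠ 0 → 0 < (f z / (z * p z)).re) :
    ‖f₁‖ ≤ 4 := by
  have h01 : (0:ℂ) ∈ ball (0:ℂ) 1 := by simp
  have hmem : ball (0:ℂ) 1 ∈ nhds (0:ℂ) := isOpen_ball.mem_nhds h01
  have hfd : DifferentiableOn ℂ f (ball (0:ℂ) 1) := hf.differentiableOn
  have hpd : DifferentiableOn ℂ p (ball (0:ℂ) 1) := hp.differentiableOn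
  have hpne : ∀ z ∈ ball (0:ℂ) 1, p z ≠ 0 := by
    intro z hz hzero
    have := hpre z hz
    rw [hzero] at this
    simp at this
  set F : ℂ → ℂ := dslope f 0 with hF
  have hFd : DifferentiableOn ℂ F (ball (0:ℂ) 1) :=
    (Complex.differentiableOn_dslope hmem).mpr hfd
  have hF0 : F 0 = 1 := by rw [hF, dslope_same, hf1]
  have hFz : ∀ z : ℂ, z ≠ 0 → F z = f z / z := by
    intro z hz
    rw [hF, dslope_of_ne _ hz, slope_def_field, hf0]
    simp [div_eq_mul_inv, mul_comm]
  -- g = F / p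
  set g : ℂ → ℂ := fun z => F z / p z with hg
  have hgd : DifferentiableOn ℂ g (ball (0:ℂ) 1) := hFd.div hpd hpne
  have hg0 : g 0 = 1 := by simp [hg, hF0, hp0]
  have hgre : ∀ z ∈ ball (0:ℂ) 1, 0 < (g z).re := by
    intro z hz
    rcases eq_or_ne z 0 with rfl | hzne
    · rw [hg0]; norm_num
    · have := hfp z hz hzne
      show 0 < (F z / p z).re
      rwa [hFz z hzne, div_div]
  have hq : ‖q‖ ≤ 2 := by
    rw [← hpq]; exact herglotz_deriv_bound p hpd hp0 hpre
  have hgq : ‖deriv g 0‖ ≤ 2 := herglotz_deriv_bound g hgd hg0 hgre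
  -- F = p * g near 0
  have hFpg : F =ᶠ[nhds 0] fun z => p z * g z := by
    filter_upwards [hmem] with z hz
    rw [hg]
    field_simp [hpne z hz]
  have hpa : DifferentiableAt ℂ p 0 := hpd.differentiableAt hmem
  have hga : DifferentiableAt ℂ g 0 := hgd.differentiableAt hmem
  have hderF : deriv F 0 = q + deriv g 0 := by
    rw [hFpg.deriv_eq]
    rw [deriv_fun_mul hpa hga, hpq, hg0, hp0]
    ring
  -- f z = z * F z for all z
  have hfzF : ∀ z : ℂ, f z = z * F z := by
    intro z
    have := sub_smul_dslope f 0 z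
    simp only [sub_zero, hf0, smul_eq_mul] at this
    rw [← this, hF]
  -- F is analytic at 0, so deriv F is differentiable at 0
  have hFan : AnalyticOnNhd ℂ F (ball (0:ℂ) 1) :=
    hFd.analyticOnNhd isOpen_ball
  have hdFan : AnalyticAt ℂ (deriv F) 0 := hFan.deriv 0 h01
  -- deriv f = F + id * deriv F on a nhd of 0
  have hderf : deriv f =ᶠ[nhds 0] fun z => F z + z * deriv F z := by
    filter_upwards [isOpen_ball.eventually_mem h01] with z hz
    have hFz' : HasDerivAt F (deriv F z) z :=
      (hFd.differentiableAt (isOpen_ball.mem_nhds hz)).hasDerivAt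
    have : HasDerivAt (fun w => w * F w) (1 * F z + z * deriv F z) z :=
      (hasDerivAt_id z).mul hFz'
    have h2 : HasDerivAt f (F z + z * deriv F z) z := by
      simpa [hfzF] using this.congr_of_eventuallyEq
        (Filter.Eventually.of_forall fun w => (hfzF w))
    rw [h2.deriv]
  have h2F : iteratedDeriv 2 f 0 = 2 * deriv F 0 := by
    have : iteratedDeriv 2 f 0 = deriv (deriv f) 0 := by
      rw [iteratedDeriv_succ, iteratedDeriv_one]
    rw [this, hderf.deriv_eq]
    have hF' : HasDerivAt F (deriv F 0) 0 :=
      (hFd.differentiableAt hmem).hasDerivAt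
    have hdF' : HasDerivAt (deriv F) (deriv (deriv F) 0) 0 :=
      hdFan.differentiableAt.hasDerivAt
    have : HasDerivAt (fun z => F z + z * deriv F z)
        (deriv F 0 + (1 * deriv F 0 + 0 * deriv (deriv F) 0)) 0 :=
      hF'.add ((hasDerivAt_id 0).mul hdF')
    rw [this.deriv]
    ring
  have hf₁ : f₁ = q + deriv g 0 := by
    have : 2 * f₁ = 2 * deriv F 0 := by rw [← hf2, h2F]
    have := mul_left_cancel₀ (two_ne_zero) this
    rw [this, hderF]
  rw [hf₁]
  calc ‖q + deriv g 0‖ ≤ ‖q‖ + ‖deriv g 0‖ :=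
        norm_add_le _ _
    _ ≤ 2 + 2 := add_le_add hq hgq
    _ = 4 := by norm_num
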